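/- For every i < j in [n] and σ ∈ S_n: the right cyclic shift R_{[i,j]} (the cycle i→i+1→⋯→j→i) satisfies R_{[i,j]} ≤ σ in Bruhat order if and only if max σ^{-1}([i]) ≥ j; and its inverse L_{[i,j]} ≤ σ if and only if max σ([i]) ≥ j. -/

import Mathlib

namespace SmoothPerm

variable {n : ℕ}

/-- Bruhat order on `S_n`, via the standard counting criterion. -/
def bruhatLE (τ σ : Equiv.Perm (Fin n)) : Prop :=
  ∀ i j : Fin n,
    (Finset.univ.filter (fun x => x ≤ i ∧ σ x ≤ j)).card ≤
      (Finset.univ.filter (fun x => x ≤ i ∧ τ x ≤ j)).card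

/-- Number of inversions (the length ℓ(σ)). -/
def invNum (σ : Equiv.Perm (Fin n)) : ℕ :=
  (Finset.univ.filter (fun p : Fin n × Fin n => p.1 < p.2 ∧ σ p.2 < σ p.1)).card

def isTransposition (τ : Equiv.Perm (Fin n)) : Prop :=
  ∃ i j : Fin n, i < j ∧ τ = Equiv.swap i j

/-- σ is smooth iff ℓ(σ) equals the number of transpositions Bruhat-below σ. -/
def smooth (σ : Equiv.Perm (Fin n)) : Prop :=
  invNum σ = Nat.card {τ : Equiv.Perm (Fin n) // isTransposition τ ∧ bruhatLE τ σ}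

def avoids4231 (σ : Equiv.Perm (Fin n)) : Prop :=
  ¬ ∃ a b c d : Fin n, a < b ∧ b < c ∧ c < d ∧ σ d < σ b ∧ σ b < σ c ∧ σ c < σ a

/-- covexillary = 3412-avoiding. -/
def covexillary (σ : Equiv.Perm (Fin n)) : Prop :=
  ¬ ∃ a b c d : Fin n, a < b ∧ b < c ∧ c < d ∧ σ c < σ d ∧ σ d < σ a ∧ σ a < σ b

def avoids321 (σ : Equiv.Perm (Fin n)) : Prop :=
  ¬ ∃ a b c : Fin n, a < b ∧ b < c ∧ σ c < σ b ∧ σ b < σ a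

/-- The 3-cycle i ↦ j ↦ k ↦ i. -/
def Rc (i j k : Fin n) : Equiv.Perm (Fin n) := Equiv.swap i k * Equiv.swap i j

def Lc (i j k : Fin n) : Equiv.Perm (Fin n) := (Rc i j k)⁻¹

def inC23 (τ : Equiv.Perm (Fin n)) : Prop :=
  isTransposition τ ∨ ∃ i j k : Fin n, i < j ∧ j < k ∧ (τ = Rc i j k ∨ τ = Lc i j k)

/-- The 2-3-table of σ. -/
def Ctab (σ : Equiv.Perm (Fin n)) : Set (Equiv.Perm (Fin n)) :=
  {τ | inC23 τ ∧ bruhatLE τ σ}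

def admissible (A : Set (Equiv.Perm (Fin n))) : Prop :=
  (∀ τ ∈ A, inC23 τ) ∧
  (∀ σ ∈ A, ∀ τ : Equiv.Perm (Fin n), inC23 τ → bruhatLE τ σ → τ ∈ A) ∧
  (∀ i j k l : Fin n, i < j → j < l → i < k → k < l →
    Rc i j l ∈ A → Lc i k l ∈ A → Equiv.swap i l ∈ A) ∧
  (∀ i j k : Fin n, i < j → j < k →
    Equiv.swap i j ∈ A → Equiv.swap j k ∈ A → (Rc i j k ∈ A ∨ Lc i j k ∈ A))

def isWedge (A : Set (Equiv.Perm (Fin n))) (i j : Fin n) : Prop :=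
  i < j ∧ Equiv.swap i j ∈ A ∧
  (∀ i' : Fin n, (i' : ℕ) + 1 = (i : ℕ) → Equiv.swap i' i ∉ A) ∧
  (∀ j' : Fin n, (j : ℕ) + 1 = (j' : ℕ) → Rc i j j' ∉ A)

def derivedSet (A : Set (Equiv.Perm (Fin n))) (i j : Fin n) : Set (Equiv.Perm (Fin n)) :=
  A \ ({Equiv.swap i j} ∪ {τ | ∃ k, j < k ∧ τ = Lc i j k} ∪
       {τ | ∃ k, i < k ∧ k < j ∧ τ = Rc i k j})

def strictTotalOn (S : Set (Equiv.Perm (Fin n)))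
    (r : Equiv.Perm (Fin n) → Equiv.Perm (Fin n) → Prop) : Prop :=
  (∀ x ∈ S, ¬ r x x) ∧
  (∀ x ∈ S, ∀ y ∈ S, ∀ z ∈ S, r x y → r y z → r x z) ∧
  (∀ x ∈ S, ∀ y ∈ S, x ≠ y → r x y ∨ r y x)

def compatibleOrder (A : Set (Equiv.Perm (Fin n)))
    (r : Equiv.Perm (Fin n) → Equiv.Perm (Fin n) → Prop) : Prop :=
  (∀ i j k : Fin n, i < j → j < k → Rc i j k ∈ A → Lc i j k ∉ A →
    r (Equiv.swap i j) (Equiv.swap j k)) ∧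
  (∀ i j k : Fin n, i < j → j < k → Lc i j k ∈ A → Rc i j k ∉ A →
    r (Equiv.swap j k) (Equiv.swap i j)) ∧
  (∀ i j k : Fin n, i < j → j < k → Equiv.swap i k ∈ A →
    ((r (Equiv.swap i j) (Equiv.swap i k) ∧ r (Equiv.swap i k) (Equiv.swap j k)) ∨
     (r (Equiv.swap j k) (Equiv.swap i k) ∧ r (Equiv.swap i k) (Equiv.swap i j))))

def coversIn (S : Set (Equiv.Perm (Fin n)))
    (r : Equiv.Perm (Fin n) → Equiv.Perm (Fin n) → Prop)
    (x y : Equiv.Perm (Fin n)) : Prop :=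
  x ∈ S ∧ y ∈ S ∧ r x y ∧ ∀ z ∈ S, ¬ (r x z ∧ r z y)

/-- m_σ(i) = max σ([i]). -/
def maxS (σ : Equiv.Perm (Fin n)) (i : Fin n) : Fin n :=
  ((Finset.univ.filter (fun x => x ≤ i)).image (fun x => σ x)).max'
    ⟨σ i, Finset.mem_image_of_mem _ (by simp)⟩

/-- The cyclic shift i → i+1 → ⋯ → j → i. -/
def Rseg (i j : Fin n) : Equiv.Perm (Fin n) :=
  ((List.finRange n).filter (fun x => decide (i ≤ x ∧ x ≤ j))).formPerm

def definedByInclusions (σ : Equiv.Perm (Fin n)) : Prop :=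
  ∀ τ : Equiv.Perm (Fin n),
    (∀ x, maxS τ x ≤ maxS σ x) → (∀ x, maxS τ⁻¹ x ≤ maxS σ⁻¹ x) → bruhatLE τ σ

def segL (i j : Fin n) : List (Fin n) :=
  (List.finRange n).filter (fun x => decide (i ≤ x ∧ x ≤ j))

lemma Rseg_eq (i j : Fin n) : Rseg i j = (segL i j).formPerm := rfl

lemma segL_nodup (i j : Fin n) : (segL i j).Nodup :=
  (List.nodup_finRange n).filter _

lemma mem_segL {i j x : Fin n} : x ∈ segL i j ↔ i ≤ x ∧ x ≤ j := by
  simp [segL, List.mem_filter]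

lemma segL_map_val (i j : Fin n) (hij : i ≤ j) :
    (segL i j).map Fin.val = List.range' (i : ℕ) ((j : ℕ) - (i : ℕ) + 1) := by
  apply fun hp h1 h2 => List.Perm.eq_of_pairwise' (r := (· ≤ · : ℕ → ℕ → Prop)) h1 h2 hp
  · apply List.perm_of_nodup_nodup_toFinset_eq
    · exact (segL_nodup i j).map Fin.val_injective
    · exact List.nodup_range' (step := 1) (by norm_num)
    · ext x
      simp only [List.mem_toFinset, List.mem_map, List.mem_range'_1, mem_segL]
      constructor
      · rintro ⟨y, ⟨h1, h2⟩, rfl⟩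
        rw [Fin.le_def] at h1 h2
        omega
      · rintro ⟨h1, h2⟩
        have hxn : x < n := by have := j.isLt; omega
        exact ⟨⟨x, hxn⟩, ⟨by rw [Fin.le_def]; exact h1,
          by rw [Fin.le_def]; simp; omega⟩, rfl⟩
  · exact List.Pairwise.map Fin.val (fun a b h => le_of_lt (Fin.lt_def.mp h))
      ((List.pairwise_lt_finRange n).filter _)
  · exact (List.pairwise_lt_range' (step := 1) (by norm_num)).imp le_of_lt

lemma segL_length (i j : Fin n) (hij : i ≤ j) :
    (segL i j).length = (j : ℕ) - (i : ℕ) + 1 := by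
  have := congrArg List.length (segL_map_val i j hij)
  simpa using this

lemma segL_getElem (i j : Fin n) (hij : i ≤ j) (k : ℕ) (hk : k < (segL i j).length) :
    ((segL i j)[k] : ℕ) = (i : ℕ) + k := by
  have h1 : ((segL i j).map Fin.val)[k]'(by simpa using hk) = ((segL i j)[k] : ℕ) :=
    List.getElem_map _
  have h2 := List.getElem_of_eq (segL_map_val i j hij) (i := k) (by simpa using hk)
  rw [List.getElem_range'_1] at h2
  omega

lemma rseg_apply_not_mem (i j x : Fin n) (h : ¬(i ≤ x ∧ x ≤ j)) : Rseg i j x = x := by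
  rw [Rseg_eq]
  exact List.formPerm_apply_of_notMem (by simpa [mem_segL] using h)

lemma rseg_apply_mid (i j x : Fin n) (hij : i ≤ j) (h1 : i ≤ x) (h2 : x < j) :
    (Rseg i j x : ℕ) = (x : ℕ) + 1 := by
  rw [Fin.le_def] at hij h1; rw [Fin.lt_def] at h2
  have hL := segL_length i j (Fin.le_def.mpr hij)
  have hk : (x : ℕ) - (i : ℕ) < (segL i j).length := by omega
  have hx : (segL i j)[(x : ℕ) - (i : ℕ)] = x :=
    Fin.ext (by rw [segL_getElem i j (Fin.le_def.mpr hij) _ hk]; omega)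
  have hform := List.formPerm_apply_getElem (segL i j) (segL_nodup i j) _ hk
  rw [hx, ← Rseg_eq] at hform
  rw [hform, segL_getElem i j (Fin.le_def.mpr hij)]
  have : ((x : ℕ) - (i : ℕ) + 1) % (segL i j).length = (x : ℕ) - (i : ℕ) + 1 := by
    apply Nat.mod_eq_of_lt; omega
  rw [this]; omega

lemma rseg_apply_j (i j : Fin n) (hij : i ≤ j) : Rseg i j j = i := by
  have hij' := Fin.le_def.mp hij
  have hL := segL_length i j hij
  have hk : (j : ℕ) - (i : ℕ) < (segL i j).length := by omega
  have hx : (segL i j)[(j : ℕ) - (i : ℕ)] = j :=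
    Fin.ext (by rw [segL_getElem i j hij _ hk]; omega)
  have hform := List.formPerm_apply_getElem (segL i j) (segL_nodup i j) _ hk
  rw [hx, ← Rseg_eq] at hform
  have hk0 : ((j : ℕ) - (i : ℕ) + 1) % (segL i j).length < (segL i j).length :=
    Nat.mod_lt _ (by omega)
  have hv := segL_getElem i j hij _ hk0
  apply Fin.ext
  rw [hform, hv, hL, Nat.mod_self]
  omega

lemma rseg_val (i j x : Fin n) (hij : i ≤ j) :
    (Rseg i j x : ℕ) =
      if (i : ℕ) ≤ (x : ℕ) ∧ (x : ℕ) < (j : ℕ) then (x : ℕ) + 1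
      else if (x : ℕ) = (j : ℕ) then (i : ℕ) else (x : ℕ) := by
  split_ifs with h1 h2
  · exact rseg_apply_mid i j x hij (Fin.le_def.mpr h1.1) (Fin.lt_def.mpr h1.2)
  · have hxj : x = j := Fin.ext h2
    rw [hxj, rseg_apply_j i j hij]
  · have h : ¬(i ≤ x ∧ x ≤ j) := by
      simp only [Fin.le_def]
      omega
    rw [rseg_apply_not_mem i j x h]


lemma N_le_left (σ : Equiv.Perm (Fin n)) (a b : Fin n) :
    (Finset.univ.filter (fun x => x ≤ a ∧ σ x ≤ b)).card ≤ (a : ℕ) + 1 := by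
  calc (Finset.univ.filter (fun x => x ≤ a ∧ σ x ≤ b)).card
      ≤ (Finset.Iic a).card := by
        apply Finset.card_le_card
        intro x hx
        simp only [Finset.mem_filter] at hx
        exact Finset.mem_Iic.mpr hx.2.1
    _ = (a : ℕ) + 1 := Fin.card_Iic a

lemma N_le_right (σ : Equiv.Perm (Fin n)) (a b : Fin n) :
    (Finset.univ.filter (fun x => x ≤ a ∧ σ x ≤ b)).card ≤ (b : ℕ) + 1 := by
  have h := Finset.card_le_card_of_injOn (fun x => σ x)
    (s := Finset.univ.filter (fun x => x ≤ a ∧ σ x ≤ b)) (t := Finset.Iic b)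
    (fun x hx => by
      simp only [Finset.mem_coe, Finset.mem_filter] at hx
      exact Finset.mem_Iic.mpr hx.2.2)
    (σ.injective.injOn)
  rwa [Fin.card_Iic] at h

lemma N_le_of_witness (σ : Equiv.Perm (Fin n)) (a b : Fin n)
    (h : ∃ x, a < x ∧ σ x ≤ b) :
    (Finset.univ.filter (fun x => x ≤ a ∧ σ x ≤ b)).card ≤ (b : ℕ) := by
  obtain ⟨x₀, hx1, hx2⟩ := h
  have h := Finset.card_le_card_of_injOn (fun x => σ x)
    (s := Finset.univ.filter (fun x => x ≤ a ∧ σ x ≤ b))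
    (t := (Finset.Iic b).erase (σ x₀))
    (fun x hx => by
      simp only [Finset.mem_coe, Finset.mem_filter] at hx
      refine Finset.mem_erase.mpr ⟨?_, Finset.mem_Iic.mpr hx.2.2⟩
      intro heq
      have : x = x₀ := σ.injective heq
      subst this
      exact absurd hx.2.1 (not_le.mpr hx1))
    (σ.injective.injOn)
  rwa [Finset.card_erase_of_mem (Finset.mem_Iic.mpr hx2), Fin.card_Iic] at h

lemma bruhatLE_rseg_of_exists (i j : Fin n) (hij : i < j) (σ : Equiv.Perm (Fin n))
    (h : ∃ x : Fin n, j ≤ x ∧ σ x ≤ i) : bruhatLE (Rseg i j) σ := by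
  obtain ⟨x₀, hx₀j, hx₀i⟩ := h
  rw [Fin.le_def] at hx₀j hx₀i
  have hijn := Fin.lt_def.mp hij
  intro a b
  by_cases hc : (i : ℕ) ≤ (b : ℕ) ∧ (b : ℕ) ≤ (a : ℕ) ∧ (a : ℕ) < (j : ℕ)
  · obtain ⟨hc1, hc2, hc3⟩ := hc
    have h1 : (Finset.univ.filter (fun x => x ≤ a ∧ σ x ≤ b)).card ≤ (b : ℕ) :=
      N_le_of_witness σ a b ⟨x₀, by rw [Fin.lt_def]; omega, by rw [Fin.le_def]; omega⟩
    have h2 : (b : ℕ) ≤ (Finset.univ.filter (fun x => x ≤ a ∧ Rseg i j x ≤ b)).card := by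
      have hsub : Finset.Iio b ⊆ Finset.univ.filter (fun x => x ≤ a ∧ Rseg i j x ≤ b) := by
        intro x hx
        rw [Finset.mem_Iio, Fin.lt_def] at hx
        have hv := rseg_val i j x hij.le
        simp only [Finset.mem_filter, Finset.mem_univ, true_and, Fin.le_def]
        split_ifs at hv <;> omega
      calc (b : ℕ) = (Finset.Iio b).card := (Fin.card_Iio b).symm
        _ ≤ _ := Finset.card_le_card hsub
    exact le_trans h1 h2
  · rcases le_total (a : ℕ) (b : ℕ) with hab | hba
    · have hsub : Finset.Iic a ⊆ Finset.univ.filter (fun x => x ≤ a ∧ Rseg i j x ≤ b) := by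
        intro x hx
        rw [Finset.mem_Iic, Fin.le_def] at hx
        have hv := rseg_val i j x hij.le
        simp only [Finset.mem_filter, Finset.mem_univ, true_and, Fin.le_def]
        by_cases hib : (i : ℕ) ≤ (b : ℕ)
        · by_cases hba' : (b : ℕ) ≤ (a : ℕ)
          · have hja : ¬ ((a : ℕ) < (j : ℕ)) := fun hlt => hc ⟨hib, hba', hlt⟩
            split_ifs at hv <;> omega
          · split_ifs at hv <;> omega
        · split_ifs at hv <;> omega
      calc (Finset.univ.filter (fun x => x ≤ a ∧ σ x ≤ b)).card ≤ (a : ℕ) + 1 :=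
            N_le_left σ a b
        _ = (Finset.Iic a).card := (Fin.card_Iic a).symm
        _ ≤ _ := Finset.card_le_card hsub
    · refine le_trans (N_le_right σ a b) ?_
      by_cases hib : (i : ℕ) ≤ (b : ℕ)
      · have hja : (j : ℕ) ≤ (a : ℕ) := by
          by_contra hlt
          push_neg at hlt
          exact hc ⟨hib, hba, hlt⟩
        by_cases hjb : (j : ℕ) < (b : ℕ)
        · have hsub : Finset.Iic b ⊆ Finset.univ.filter (fun x => x ≤ a ∧ Rseg i j x ≤ b) := by
            intro x hx
            rw [Finset.mem_Iic, Fin.le_def] at hx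
            have hv := rseg_val i j x hij.le
            simp only [Finset.mem_filter, Finset.mem_univ, true_and, Fin.le_def]
            split_ifs at hv <;> omega
          calc (b : ℕ) + 1 = (Finset.Iic b).card := (Fin.card_Iic b).symm
            _ ≤ _ := Finset.card_le_card hsub
        · push_neg at hjb
          have hjmem : j ∉ Finset.Iio b := by
            simp only [Finset.mem_Iio, Fin.lt_def, not_lt]
            omega
          have hsub : insert j (Finset.Iio b) ⊆
              Finset.univ.filter (fun x => x ≤ a ∧ Rseg i j x ≤ b) := by
            intro x hx
            have hv := rseg_val i j x hij.le
            simp only [Finset.mem_filter, Finset.mem_univ, true_and, Fin.le_def]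
            rcases Finset.mem_insert.mp hx with rfl | hx
            · split_ifs at hv <;> omega
            · rw [Finset.mem_Iio, Fin.lt_def] at hx
              split_ifs at hv <;> omega
          calc (b : ℕ) + 1 = (insert j (Finset.Iio b)).card := by
                rw [Finset.card_insert_of_notMem hjmem, Fin.card_Iio]
            _ ≤ _ := Finset.card_le_card hsub
      · push_neg at hib
        have hsub : Finset.Iic b ⊆ Finset.univ.filter (fun x => x ≤ a ∧ Rseg i j x ≤ b) := by
          intro x hx
          rw [Finset.mem_Iic, Fin.le_def] at hx
          have hv := rseg_val i j x hij.le
          simp only [Finset.mem_filter, Finset.mem_univ, true_and, Fin.le_def]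
          split_ifs at hv <;> omega
        calc (b : ℕ) + 1 = (Finset.Iic b).card := (Fin.card_Iic b).symm
          _ ≤ _ := Finset.card_le_card hsub

lemma exists_of_bruhatLE_rseg (i j : Fin n) (hij : i < j) (σ : Equiv.Perm (Fin n))
    (h : bruhatLE (Rseg i j) σ) : ∃ x : Fin n, j ≤ x ∧ σ x ≤ i := by
  by_contra hn
  push_neg at hn
  have hijn := Fin.lt_def.mp hij
  have hjn := j.isLt
  set a : Fin n := ⟨(j : ℕ) - 1, by omega⟩ with ha
  have haval : (a : ℕ) = (j : ℕ) - 1 := rfl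
  have hspec := h a i
  have hupper : (Finset.univ.filter (fun x => x ≤ a ∧ Rseg i j x ≤ i)).card ≤ (i : ℕ) := by
    have h2 := Finset.card_le_card_of_injOn (fun x => Rseg i j x)
      (s := Finset.univ.filter (fun x => x ≤ a ∧ Rseg i j x ≤ i))
      (t := Finset.Iio i)
      (fun x hx => by
        simp only [Finset.mem_coe, Finset.mem_filter, Finset.mem_univ, true_and, Fin.le_def, haval] at hx
        have hv := rseg_val i j x hij.le
        simp only [Finset.mem_coe, Finset.mem_Iio, Fin.lt_def]
        split_ifs at hv <;> omega)
      ((Rseg i j).injective.injOn)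
    rwa [Fin.card_Iio] at h2
  have hlower : (i : ℕ) + 1 ≤ (Finset.univ.filter (fun x => x ≤ a ∧ σ x ≤ i)).card := by
    have h2 := Finset.card_le_card_of_injOn (fun v => σ⁻¹ v)
      (s := Finset.Iic i)
      (t := Finset.univ.filter (fun x => x ≤ a ∧ σ x ≤ i))
      (fun v hv => by
        rw [Finset.mem_coe, Finset.mem_Iic] at hv
        have happ : σ (σ⁻¹ v) = v := σ.apply_symm_apply v
        have hlt : ((σ⁻¹ v : Fin n) : ℕ) < (j : ℕ) := by
          by_contra hge
          push_neg at hge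
          have := hn (σ⁻¹ v) (Fin.le_def.mpr hge)
          rw [happ] at this
          exact absurd hv this.not_ge
        simp only [Finset.mem_coe, Finset.mem_filter, Finset.mem_univ, true_and, Fin.le_def, haval, happ]
        exact ⟨by omega, Fin.le_def.mp hv⟩)
      (σ⁻¹.injective.injOn)
    rwa [Fin.card_Iic] at h2
  omega

lemma exists_iff_le_maxS (σ : Equiv.Perm (Fin n)) (i j : Fin n) :
    (∃ x : Fin n, j ≤ x ∧ σ x ≤ i) ↔ j ≤ maxS σ⁻¹ i := by
  constructor
  · rintro ⟨x, hjx, hxi⟩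
    refine le_trans hjx (Finset.le_max' _ _ ?_)
    refine Finset.mem_image.mpr ⟨σ x, ?_, ?_⟩
    · simp only [Finset.mem_filter, Finset.mem_univ, true_and]
      exact hxi
    · simp
  · intro hle
    have hmem := Finset.max'_mem _
      (⟨σ⁻¹ i, Finset.mem_image_of_mem _ (by simp)⟩ :
        ((Finset.univ.filter (fun x => x ≤ i)).image (fun x => σ⁻¹ x)).Nonempty)
    obtain ⟨y, hy, hyeq⟩ := Finset.mem_image.mp hmem
    simp only [Finset.mem_filter, Finset.mem_univ, true_and] at hy
    refine ⟨σ⁻¹ y, ?_, by simpa using hy⟩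
    show j ≤ σ⁻¹ y
    have : maxS σ⁻¹ i = σ⁻¹ y := hyeq.symm
    rw [this] at hle
    exact hle

lemma bruhatLE_inv_iff (τ σ : Equiv.Perm (Fin n)) :
    bruhatLE τ σ ↔ bruhatLE τ⁻¹ σ⁻¹ := by
  have key : ∀ (π : Equiv.Perm (Fin n)) (a b : Fin n),
      (Finset.univ.filter (fun x => x ≤ a ∧ π x ≤ b)).card =
        (Finset.univ.filter (fun x => x ≤ b ∧ π⁻¹ x ≤ a)).card := by
    intro π a b
    apply Finset.card_nbij (i := fun x => π x)
    · intro x hx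
      simp only [Finset.mem_coe, Finset.mem_filter, Finset.mem_univ, true_and] at hx ⊢
      exact ⟨hx.2, by simpa using hx.1⟩
    · exact π.injective.injOn
    · intro y hy
      simp only [Finset.coe_filter, Finset.mem_univ, true_and, Set.mem_setOf_eq,
        Set.mem_image] at hy ⊢
      exact ⟨π⁻¹ y, ⟨hy.2, by simpa using hy.1⟩,
        π.apply_symm_apply y⟩
  have aux : ∀ τ σ : Equiv.Perm (Fin n), bruhatLE τ σ → bruhatLE τ⁻¹ σ⁻¹ := by
    intro τ σ h a b
    rw [key σ⁻¹ a b, key τ⁻¹ a b]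
    simp only [inv_inv]
    exact h b a
  refine ⟨aux τ σ, fun h => ?_⟩
  have := aux τ⁻¹ σ⁻¹ h
  rwa [inv_inv, inv_inv] at this

theorem cyclic_shift_le_iff (n : ℕ) (i j : Fin n) (hij : i < j)
    (σ : Equiv.Perm (Fin n)) :
    (bruhatLE (Rseg i j) σ ↔ j ≤ maxS σ⁻¹ i) ∧
    (bruhatLE (Rseg i j)⁻¹ σ ↔ j ≤ maxS σ i) := by
  constructor
  · rw [← exists_iff_le_maxS σ i j]
    exact ⟨exists_of_bruhatLE_rseg i j hij σ, bruhatLE_rseg_of_exists i j hij σ⟩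
  · have h2 : bruhatLE (Rseg i j)⁻¹ σ ↔ bruhatLE (Rseg i j) σ⁻¹ := by
      rw [bruhatLE_inv_iff, inv_inv]
    rw [h2]
    have h3 := exists_iff_le_maxS σ⁻¹ i j
    rw [inv_inv] at h3
    rw [← h3]
    exact ⟨exists_of_bruhatLE_rseg i j hij σ⁻¹, bruhatLE_rseg_of_exists i j hij σ⁻¹⟩

end SmoothPerm
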